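/- Let d ≥ 1, let c ∈ ℝ^d with c_i > 0 for all i, and let p ∈ ℝ^d with p_i > 0 for all i. Define the generalized super-ellipsoid E(d,p) = {(δ_1,…,δ_d) ∈ ℝ^d : Σ_{i=1}^d |δ_i/c_i|^{p_i} ≤ 1}. Then the d-dimensional Lebesgue measure of E(d,p) equals 2^d · (Π_{i=1}^d c_i Γ(1 + 1/p_i)) / Γ(1 + Σ_{i=1}^d 1/p_i). -/

import Mathlib

open MeasureTheory Real Set

private lemma prod_rpow_const' {ι : Type*} (s : Finset ι) {t : ℝ} (ht : 0 < t) (a : ι → ℝ) :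
    ∏ i ∈ s, t ^ a i = t ^ (∑ i ∈ s, a i) := by
  classical
  induction s using Finset.cons_induction with
  | empty => simp
  | cons j s hj ih =>
      rw [Finset.prod_cons, Finset.sum_cons, ih, ← Real.rpow_add ht]

private lemma integrableOn_exp_neg_rpow' {q : ℝ} (hq : 0 < q) :
    IntegrableOn (fun x : ℝ => Real.exp (-x ^ q)) (Set.Ioi 0) := by
  have h0 : (0:ℝ) < 1 / q := by positivity
  have hG : IntegrableOn (fun y : ℝ => Real.exp (-y) * y ^ (1 / q - 1)) (Set.Ioi 0) :=
    Real.GammaIntegral_convergent h0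
  have h := (integrableOn_Ioi_comp_rpow_iff'
    (fun y : ℝ => Real.exp (-y) * y ^ (1 / q - 1)) hq.ne').mpr hG
  refine h.congr_fun (fun x hx => ?_) measurableSet_Ioi
  have hx' : (0:ℝ) < x := hx
  have he : q - 1 + q * (1 / q - 1) = 0 := by
    field_simp
    ring
  beta_reduce
  rw [smul_eq_mul, ← Real.rpow_mul hx'.le, mul_comm (rexp _), ← mul_assoc,
    ← Real.rpow_add hx', he, Real.rpow_zero, one_mul]

private lemma integrable_exp_neg_abs_rpow' {cc q : ℝ} (hc : 0 < cc) (hq : 0 < q) :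
    Integrable (fun u : ℝ => Real.exp (-|u / cc| ^ q)) := by
  have hIoi : IntegrableOn (fun u : ℝ => Real.exp (-|u / cc| ^ q)) (Set.Ioi 0) := by
    have h := (integrableOn_Ioi_comp_mul_left_iff
      (fun x : ℝ => Real.exp (-x ^ q)) 0 (inv_pos.mpr hc)).mpr
      (by simpa using integrableOn_exp_neg_rpow' hq)
    refine (h.congr_fun (fun x hx => ?_) measurableSet_Ioi)
    have hx' : (0:ℝ) < x := hx
    rw [abs_of_pos (div_pos hx' hc), div_eq_inv_mul]
  have hIic : IntegrableOn (fun u : ℝ => Real.exp (-|u / cc| ^ q)) (Set.Iic 0) := by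
    rw [← Measure.map_neg_eq_self (volume : Measure ℝ)]
    have m : MeasurableEmbedding fun x : ℝ => -x :=
      (Homeomorph.neg ℝ).measurableEmbedding
    rw [m.integrableOn_map_iff]
    simp_rw [Function.comp_def, neg_div, abs_neg, Set.neg_preimage, Set.neg_Iic, neg_zero]
    exact Iff.mpr integrableOn_Ici_iff_integrableOn_Ioi hIoi
  rw [← integrableOn_univ, ← Set.Iic_union_Ioi (a := (0:ℝ))]
  exact hIic.union hIoi

private lemma integral_exp_neg_abs_rpow' {cc q : ℝ} (hc : 0 < cc) (hq : 0 < q) :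
    ∫ u : ℝ, Real.exp (-|u / cc| ^ q) = 2 * (cc * Real.Gamma (1 / q + 1)) := by
  have h0 : ∀ u : ℝ, Real.exp (-|u / cc| ^ q) = Real.exp (-(|u| / cc) ^ q) := by
    intro u; rw [abs_div, abs_of_pos hc]
  simp_rw [h0]
  rw [integral_comp_abs (f := fun x => Real.exp (-(x / cc) ^ q))]
  have h2 : ∫ x in Set.Ioi (0:ℝ), Real.exp (-(x / cc) ^ q)
      = cc * ∫ x in Set.Ioi (0:ℝ), Real.exp (-x ^ q) := by
    have := integral_comp_mul_left_Ioi (fun x : ℝ => Real.exp (-x ^ q)) 0 (inv_pos.mpr hc)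
    simp only [mul_zero, inv_inv, smul_eq_mul] at this
    rw [← this]
    congr 1 with x
    rw [div_eq_inv_mul]
  rw [h2, integral_exp_neg_rpow hq]

private lemma superellipsoid_scaling' {d : ℕ} (c p : Fin d → ℝ)
    (hp : ∀ i, 0 < p i) {t : ℝ} (ht : 0 < t) :
    volume {x : Fin d → ℝ | ∑ i, |x i / c i| ^ p i ≤ t}
      = ENNReal.ofReal (t ^ (∑ i, 1 / p i)) *
        volume {x : Fin d → ℝ | ∑ i, |x i / c i| ^ p i ≤ 1} := by
  set f : (Fin d → ℝ) →ₗ[ℝ] (Fin d → ℝ) :=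
    Matrix.toLin' (Matrix.diagonal fun i => t ^ (-(1 / p i))) with hf
  have hfapp : ∀ (x : Fin d → ℝ) i, f x i = t ^ (-(1 / p i)) * x i := by
    intro x i
    simp [hf, Matrix.toLin'_apply, Matrix.mulVec_diagonal]
  have hdet : LinearMap.det f = t ^ (-(∑ i, 1 / p i)) := by
    rw [hf, LinearMap.det_toLin', Matrix.det_diagonal, prod_rpow_const' _ ht,
      ← Finset.sum_neg_distrib]
  have hdet0 : LinearMap.det f ≠ 0 := by
    rw [hdet]; exact (rpow_pos_of_pos ht _).ne'
  have hpre : f ⁻¹' {x : Fin d → ℝ | ∑ i, |x i / c i| ^ p i ≤ 1}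
      = {x : Fin d → ℝ | ∑ i, |x i / c i| ^ p i ≤ t} := by
    ext x
    simp only [Set.mem_preimage, Set.mem_setOf_eq, hfapp]
    have key : ∀ i, |t ^ (-(1 / p i)) * x i / c i| ^ p i = t⁻¹ * |x i / c i| ^ p i := by
      intro i
      have hme : -(1 / p i) * p i = -1 := by
        field_simp
        rw [div_self (hp i).ne']
      rw [mul_div_assoc, abs_mul, abs_of_pos (rpow_pos_of_pos ht _),
        Real.mul_rpow (rpow_pos_of_pos ht _).le (abs_nonneg _),
        ← Real.rpow_mul ht.le, hme, Real.rpow_neg_one]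
    simp_rw [key, ← Finset.mul_sum]
    rw [inv_mul_le_iff₀ ht, mul_one]
  rw [← hpre, Measure.addHaar_preimage_linearMap volume hdet0, hdet,
    Real.rpow_neg ht.le, inv_inv, abs_of_pos (rpow_pos_of_pos ht _)]

/-- Lebesgue measure of the generalized super-ellipsoid
`E(d,p) = {δ : ∑ i |δ_i/c_i|^{p_i} ≤ 1}`. -/
theorem lebesgue_measure_generalized_superellipsoid
    {d : ℕ} (hd : 1 ≤ d)
    (c : Fin d → ℝ) (hc : ∀ i, 0 < c i)
    (p : Fin d → ℝ) (hp : ∀ i, 0 < p i) :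
    volume {δ : Fin d → ℝ | ∑ i, |δ i / c i| ^ p i ≤ 1} =
      ENNReal.ofReal
        (2 ^ d * (∏ i, c i * Real.Gamma (1 + 1 / p i)) /
          Real.Gamma (1 + ∑ i, 1 / p i)) := by
  classical
  set F : (Fin d → ℝ) → ℝ := fun x => ∑ i, |x i / c i| ^ p i with hF
  set s : ℝ := ∑ i, 1 / p i with hs
  have hs0 : 0 ≤ s := Finset.sum_nonneg fun i _ => one_div_nonneg.mpr (hp i).le
  have hs1 : (0:ℝ) < s + 1 := by linarith
  set V : ENNReal := volume {x : Fin d → ℝ | F x ≤ 1} with hV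
  have hFmeas : Measurable F := by
    apply Finset.measurable_sum
    intro i _
    fun_prop
  have hFnn : ∀ x, 0 ≤ F x := fun x =>
    Finset.sum_nonneg fun i _ => Real.rpow_nonneg (abs_nonneg _) _
  set S : Set ((Fin d → ℝ) × ℝ) := {q | F q.1 ≤ q.2} with hS
  have hSmeas : MeasurableSet S := measurableSet_le (hFmeas.comp measurable_fst) measurable_snd
  have hhm : Measurable fun q : (Fin d → ℝ) × ℝ => ENNReal.ofReal (Real.exp (-q.2)) :=
    (Real.measurable_exp.comp measurable_snd.neg).ennreal_ofReal
  -- step A : pointwise layer representation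
  have stepA : ∀ x : Fin d → ℝ, ENNReal.ofReal (Real.exp (-F x))
      = ∫⁻ t in Ioi (0:ℝ), S.indicator (fun q => ENNReal.ofReal (Real.exp (-q.2))) (x, t) := by
    intro x
    have h1 : ∀ t : ℝ, S.indicator (fun q => ENNReal.ofReal (Real.exp (-q.2))) (x, t)
        = (Ici (F x)).indicator (fun t => ENNReal.ofReal (Real.exp (-t))) t := by
      intro t
      simp only [Set.indicator_apply, hS, Set.mem_setOf_eq, Set.mem_Ici]
    symm
    simp_rw [h1]
    rw [lintegral_indicator measurableSet_Ici, Measure.restrict_restrict measurableSet_Ici]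
    have hset : (Ici (F x) ∩ Ioi 0 : Set ℝ) =ᵐ[volume] Ici (F x) := by
      rcases eq_or_lt_of_le (hFnn x) with h | h
      · rw [← h, Set.inter_eq_right.mpr Ioi_subset_Ici_self]
        exact Ioi_ae_eq_Ici
      · have he : Ici (F x) ∩ Ioi (0:ℝ) = Ici (F x) :=
          Set.inter_eq_left.mpr fun t ht => lt_of_lt_of_le h ht
        rw [he]
        exact Filter.EventuallyEq.rfl
    rw [setLIntegral_congr hset, setLIntegral_congr (Ioi_ae_eq_Ici (a := F x)).symm,
      ← ofReal_integral_eq_lintegral_ofReal]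
    · rw [integral_exp_neg_Ioi]
    · exact (by simpa using exp_neg_integrableOn_Ioi (F x) one_pos :
        IntegrableOn (fun t => Real.exp (-t)) (Ioi (F x)))
    · exact Filter.Eventually.of_forall fun t => (Real.exp_pos _).le
  -- step B : swap the integrals
  have key : ∫⁻ x : Fin d → ℝ, ENNReal.ofReal (Real.exp (-F x))
      = ∫⁻ t in Ioi (0:ℝ),
          ENNReal.ofReal (Real.exp (-t)) * volume {x : Fin d → ℝ | F x ≤ t} := by
    simp_rw [stepA]
    rw [lintegral_lintegral_swap (f := fun (x : Fin d → ℝ) (t : ℝ) =>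
      S.indicator (fun q => ENNReal.ofReal (Real.exp (-q.2))) (x, t))
      ((hhm.indicator hSmeas).aemeasurable)]
    refine lintegral_congr fun t => ?_
    have h2 : ∀ x : Fin d → ℝ,
        S.indicator (fun q => ENNReal.ofReal (Real.exp (-q.2))) (x, t)
          = ({x : Fin d → ℝ | F x ≤ t}).indicator
              (fun _ => ENNReal.ofReal (Real.exp (-t))) x := by
      intro x
      simp only [Set.indicator_apply, hS, Set.mem_setOf_eq]
    simp_rw [h2]
    rw [lintegral_indicator (measurableSet_le hFmeas measurable_const), setLIntegral_const]
  -- step C : use scaling and compute the t-integral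
  have hGammaInt : ∫⁻ t in Ioi (0:ℝ), ENNReal.ofReal (Real.exp (-t) * t ^ s)
      = ENNReal.ofReal (Real.Gamma (s + 1)) := by
    have hnn : 0 ≤ᵐ[volume.restrict (Ioi (0:ℝ))]
        fun x : ℝ => Real.exp (-x) * x ^ (s + 1 - 1) := by
      filter_upwards [ae_restrict_mem measurableSet_Ioi] with t ht
      have ht' : (0:ℝ) < t := ht
      positivity
    have h4 := ofReal_integral_eq_lintegral_ofReal
      (Real.GammaIntegral_convergent hs1) hnn
    rw [add_sub_cancel_right] at h4
    have hG2 : Real.Gamma (s + 1) = ∫ x in Ioi (0:ℝ), Real.exp (-x) * x ^ s := by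
      rw [Real.Gamma_eq_integral hs1, add_sub_cancel_right]
    rw [← h4, hG2]
  have key2 : ∫⁻ x : Fin d → ℝ, ENNReal.ofReal (Real.exp (-F x))
      = ENNReal.ofReal (Real.Gamma (s + 1)) * V := by
    rw [key]
    have h3 : ∫⁻ t in Ioi (0:ℝ),
        ENNReal.ofReal (Real.exp (-t)) * volume {x : Fin d → ℝ | F x ≤ t}
        = ∫⁻ t in Ioi (0:ℝ), ENNReal.ofReal (Real.exp (-t) * t ^ s) * V := by
      refine setLIntegral_congr_fun measurableSet_Ioi
        (fun t ht => ?_)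
      rw [superellipsoid_scaling' c p hp ht, ← hs,
        ENNReal.ofReal_mul (Real.exp_pos _).le, mul_assoc]
    rw [h3, lintegral_mul_const _ (by fun_prop), hGammaInt]
  -- step D : compute the product integral
  have hInt : Integrable (fun x : Fin d → ℝ => ∏ i, Real.exp (-|x i / c i| ^ p i)) :=
    Integrable.fintype_prod fun i => integrable_exp_neg_abs_rpow' (hc i) (hp i)
  have hprod : ∀ x : Fin d → ℝ,
      Real.exp (-F x) = ∏ i, Real.exp (-|x i / c i| ^ p i) := by
    intro x
    rw [hF, ← Real.exp_sum]
    simp [Finset.sum_neg_distrib]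
  have key3 : ∫⁻ x : Fin d → ℝ, ENNReal.ofReal (Real.exp (-F x))
      = ENNReal.ofReal (∏ i, 2 * (c i * Real.Gamma (1 / p i + 1))) := by
    simp_rw [hprod]
    rw [← ofReal_integral_eq_lintegral_ofReal hInt
      (Filter.Eventually.of_forall fun x =>
        Finset.prod_nonneg fun i _ => (Real.exp_pos _).le)]
    rw [integral_fintype_prod_volume_eq_prod (f := fun (i : Fin d) (u : ℝ) =>
      Real.exp (-|u / c i| ^ p i))]
    congr 1
    exact Finset.prod_congr rfl fun i _ =>
      integral_exp_neg_abs_rpow' (hc i) (hp i)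
  -- assemble
  have hGpos : 0 < Real.Gamma (s + 1) := Real.Gamma_pos_of_pos hs1
  have hmain : ENNReal.ofReal (∏ i, 2 * (c i * Real.Gamma (1 / p i + 1)))
      = ENNReal.ofReal (Real.Gamma (s + 1)) * V := by
    rw [← key3, key2]
  have hVeq : V = ENNReal.ofReal
      ((∏ i, 2 * (c i * Real.Gamma (1 / p i + 1))) / Real.Gamma (s + 1)) := by
    rw [ENNReal.ofReal_div_of_pos hGpos]
    rw [ENNReal.eq_div_iff (by simpa using hGpos) ENNReal.ofReal_ne_top]
    exact hmain.symm
  show V = _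
  rw [hVeq]
  have h1 : ∀ i : Fin d, (1 : ℝ) / p i + 1 = 1 + 1 / p i := fun i => add_comm _ _
  simp_rw [h1, add_comm s 1]
  rw [Finset.prod_mul_distrib, Finset.prod_const, Finset.card_univ, Fintype.card_fin]
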